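/- Let X, Y be compact Hausdorff spaces and Π : Y → X a continuous surjection, and let G be a compact group acting continuously on Y such that each fibre of Π is a G-orbit (G·y = Π⁻¹({Π(y)}) for all y ∈ Y). Then Π is an open map. -/

import Mathlib

open Pointwise


theorem open_map_of_fibres_are_orbits {X Y G : Type*}
    [TopologicalSpace X] [CompactSpace X] [T2Space X]
    [TopologicalSpace Y] [CompactSpace Y] [T2Space Y]
    [Group G] [TopologicalSpace G] [IsTopologicalGroup G] [CompactSpace G] [T2Space G]
    [MulAction G Y] [ContinuousSMul G Y]
    (proj : C(Y, X)) (hsurj : Function.Surjective proj)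
    (horbit : ∀ y : Y, MulAction.orbit G y = proj ⁻¹' {proj y}) :
    IsOpenMap proj := by
  have hq : Topology.IsQuotientMap proj :=
    proj.continuous.isClosedMap.isQuotientMap proj.continuous hsurj
  intro U hU
  rw [← hq.isOpen_preimage]
  have key : proj ⁻¹' (proj '' U) = ⋃ g : G, g • U := by
    ext y
    simp only [Set.mem_preimage, Set.mem_image, Set.mem_iUnion, Set.mem_smul_set]
    constructor
    · rintro ⟨u, hu, hpu⟩
      have : y ∈ MulAction.orbit G u := by
        rw [horbit u]; simp [hpu]
      obtain ⟨g, hg⟩ := this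
      exact ⟨g, u, hu, hg⟩
    · rintro ⟨g, u, hu, rfl⟩
      refine ⟨u, hu, ?_⟩
      have : g • u ∈ MulAction.orbit G u := ⟨g, rfl⟩
      rw [horbit u] at this
      exact this.symm
  rw [key]
  exact isOpen_iUnion fun g => hU.smul g
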